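/- arXiv:2511.01845 — 5 statements merged into one kernel-verified Lean document; each statement's English description precedes it below -/
import Mathlib

section
/- Let d ≥ 1, let g ≥ 1, and let P_1, …, P_g be pairwise commuting d × d complex matrices with P_j² = I for each j. Let X be a d × d complex matrix such that for every j, either P_j·X = X·P_j or P_j·X = −X·P_j; let S := { j : P_j X = −X P_j } be the set of anticommuting indices. Let θ_1, …, θ_g be real numbers and set U := Π_{j=1}^{g} exp(−(θ_j/2)·i·P_j). Then (Π_{j=1}^{g} exp((θ_j/2)·i·P_j)) · X · U = ( Π_{j ∈ S} ( cos(θ_j) · I + (i·sin(θ_j)) · P_j ) ) · X. -/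
open NormedSpace

attribute [local instance] Classical.propDecidable

section Aux

variable {d : ℕ}

private lemma exp_smul_involution (P : Matrix (Fin d) (Fin d) ℂ) (hP : P * P = 1) (c : ℂ) :
    exp (c • P) =
      Complex.cosh c • (1 : Matrix (Fin d) (Fin d) ℂ) + Complex.sinh c • P := by
  letI : SeminormedRing (Matrix (Fin d) (Fin d) ℂ) := Matrix.linftyOpSemiNormedRing
  letI : NormedRing (Matrix (Fin d) (Fin d) ℂ) := Matrix.linftyOpNormedRing
  letI : NormedAlgebra ℂ (Matrix (Fin d) (Fin d) ℂ) := Matrix.linftyOpNormedAlgebra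
  have key : ∀ x y : ℂ × ℂ,
      (((x.1 + x.2) / 2) • (1 : Matrix (Fin d) (Fin d) ℂ) + ((x.1 - x.2) / 2) • P) *
          (((y.1 + y.2) / 2) • (1 : Matrix (Fin d) (Fin d) ℂ) + ((y.1 - y.2) / 2) • P) =
        ((x.1 * y.1 + x.2 * y.2) / 2) • (1 : Matrix (Fin d) (Fin d) ℂ) +
          ((x.1 * y.1 - x.2 * y.2) / 2) • P := by
    intro x y
    simp only [mul_add, add_mul, smul_mul_assoc, mul_smul_comm, smul_smul, hP, mul_one, one_mul]
    match_scalars <;> ring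
  let φ : ℂ × ℂ →+* Matrix (Fin d) (Fin d) ℂ :=
    { toFun := fun p => ((p.1 + p.2) / 2) • (1 : Matrix (Fin d) (Fin d) ℂ) + ((p.1 - p.2) / 2) • P
      map_one' := by norm_num
      map_mul' := fun x y => by simpa using (key x y).symm
      map_zero' := by norm_num
      map_add' := fun x y => by
        simp only [Prod.fst_add, Prod.snd_add]
        match_scalars <;> ring }
  have hcont : Continuous φ := by
    show Continuous fun p : ℂ × ℂ =>
      ((p.1 + p.2) / 2) • (1 : Matrix (Fin d) (Fin d) ℂ) + ((p.1 - p.2) / 2) • P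
    fun_prop
  have hφcP : φ (c, -c) = c • P := by
    show ((c + -c) / 2) • (1 : Matrix (Fin d) (Fin d) ℂ) + ((c - -c) / 2) • P = c • P
    have h1 : (c + -c) / 2 = 0 := by ring
    have h2 : (c - -c) / 2 = c := by ring
    rw [h1, h2, zero_smul, zero_add]
  have hexp : exp ((c, -c) : ℂ × ℂ) = (Complex.exp c, Complex.exp (-c)) := by
    apply Prod.ext
    · rw [Prod.fst_exp, ← Complex.exp_eq_exp_ℂ]
    · rw [Prod.snd_exp, ← Complex.exp_eq_exp_ℂ]
  calc exp (c • P) = φ (exp ((c, -c) : ℂ × ℂ)) := by rw [← hφcP, map_exp φ hcont]; rfl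
    _ = φ (Complex.exp c, Complex.exp (-c)) := by rw [hexp]
    _ = Complex.cosh c • (1 : Matrix (Fin d) (Fin d) ℂ) + Complex.sinh c • P := by
        show ((Complex.exp c + Complex.exp (-c)) / 2) • (1 : Matrix (Fin d) (Fin d) ℂ) +
            ((Complex.exp c - Complex.exp (-c)) / 2) • P = _
        rw [Complex.cosh, Complex.sinh]

private lemma exp_prod_one (A : Matrix (Fin d) (Fin d) ℂ) (c : ℂ) :
    exp (c • A) * exp ((-c) • A) = 1 := by
  rw [← Matrix.exp_add_of_commute _ _ (((Commute.refl A).smul_left c).smul_right (-c))]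
  rw [show c • A + (-c) • A = 0 by rw [neg_smul, add_neg_cancel], exp_zero]

private lemma single_gate (P X : Matrix (Fin d) (Fin d) ℂ) (hP : P * P = 1)
    (hcx : P * X = X * P ∨ P * X = -(X * P)) (t : ℝ) :
    exp (((t / 2 : ℂ) * Complex.I) • P) * X * exp ((-(t / 2 : ℂ) * Complex.I) • P) =
      (if P * X = -(X * P) then
          (Real.cos t : ℂ) • (1 : Matrix (Fin d) (Fin d) ℂ) +
            (Complex.I * (Real.sin t : ℂ)) • P
        else 1) * X := by
  set c : ℂ := (t / 2 : ℂ) * Complex.I with hc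
  have hneg : (-(t / 2 : ℂ) * Complex.I) • P = (-c) • P := by rw [neg_mul]
  rw [hneg]
  by_cases h : P * X = -(X * P)
  · rw [if_pos h]
    have hXP : X * P = -(P * X) := by rw [h, neg_neg]
    have hswap : X * exp ((-c) • P) = exp (c • P) * X := by
      rw [exp_smul_involution P hP, exp_smul_involution P hP, Complex.cosh_neg, Complex.sinh_neg]
      simp only [mul_add, add_mul, mul_smul_comm, smul_mul_assoc, mul_one, one_mul, hXP]
      module
    rw [mul_assoc, hswap, ← mul_assoc,
      ← Matrix.exp_add_of_commute _ _ (((Commute.refl P).smul_left c).smul_right c),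
      show c • P + c • P = ((t : ℂ) * Complex.I) • P by rw [← add_smul, hc]; ring_nf,
      exp_smul_involution P hP, Complex.cosh_mul_I, Complex.sinh_mul_I,
      ← Complex.ofReal_cos, ← Complex.ofReal_sin, mul_comm (Real.sin t : ℂ) Complex.I]
  · rw [if_neg h, one_mul]
    have hcm : Commute P X := hcx.resolve_right h
    have hcom : Commute (exp (c • P)) X := ((hcm.smul_left c).exp_left)
    rw [hcom.eq, mul_assoc, exp_prod_one P c, mul_one]

private lemma commute_right_factor {Y N : Matrix (Fin d) (Fin d) ℂ} (h : Commute Y N)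
    (p : Prop) [Decidable p] (a b : ℂ) :
    Commute Y (if p then a • (1 : Matrix (Fin d) (Fin d) ℂ) + b • N else 1) := by
  split
  · exact ((Commute.one_right Y).smul_right a).add_right (h.smul_right b)
  · exact Commute.one_right Y

private lemma main_aux (X : Matrix (Fin d) (Fin d) ℂ) (g : ℕ) :
    ∀ (P : Fin g → Matrix (Fin d) (Fin d) ℂ),
      (∀ j l, P j * P l = P l * P j) →
      (∀ j, P j * P j = 1) →
      (∀ j, P j * X = X * P j ∨ P j * X = -(X * P j)) →
      ∀ θ : Fin g → ℝ,
      (List.ofFn fun j => exp (((θ j / 2 : ℂ) * Complex.I) • P j)).prod * X *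
          (List.ofFn fun j => exp ((-(θ j / 2 : ℂ) * Complex.I) • P j)).prod =
        (List.ofFn fun j =>
            if P j * X = -(X * P j) then
              (Real.cos (θ j) : ℂ) • (1 : Matrix (Fin d) (Fin d) ℂ) +
                (Complex.I * (Real.sin (θ j) : ℂ)) • P j
            else 1).prod * X := by
  induction g with
  | zero => intro P _ _ _ θ; simp
  | succ n ih =>
    intro P hcomm hinv hcx θ
    have hIH := ih (fun j => P j.succ) (fun j l => hcomm j.succ l.succ)
      (fun j => hinv j.succ) (fun j => hcx j.succ) (fun j => θ j.succ)
    simp only [List.ofFn_succ, List.prod_cons]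
    set E0 : Matrix (Fin d) (Fin d) ℂ := exp (((θ 0 / 2 : ℂ) * Complex.I) • P 0) with hE0
    set E0' : Matrix (Fin d) (Fin d) ℂ := exp ((-(θ 0 / 2 : ℂ) * Complex.I) • P 0) with hE0'
    set L : List (Matrix (Fin d) (Fin d) ℂ) :=
      List.ofFn fun j : Fin n => exp (((θ j.succ / 2 : ℂ) * Complex.I) • P j.succ) with hL
    set R : List (Matrix (Fin d) (Fin d) ℂ) :=
      List.ofFn fun j : Fin n => exp ((-(θ j.succ / 2 : ℂ) * Complex.I) • P j.succ) with hR
    set F : List (Matrix (Fin d) (Fin d) ℂ) :=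
      List.ofFn (fun j : Fin n =>
        if P j.succ * X = -(X * P j.succ) then
          (Real.cos (θ j.succ) : ℂ) • (1 : Matrix (Fin d) (Fin d) ℂ) +
            (Complex.I * (Real.sin (θ j.succ) : ℂ)) • P j.succ
        else 1) with hF
    set F0 : Matrix (Fin d) (Fin d) ℂ :=
      if P 0 * X = -(X * P 0) then
        (Real.cos (θ 0) : ℂ) • (1 : Matrix (Fin d) (Fin d) ℂ) +
          (Complex.I * (Real.sin (θ 0) : ℂ)) • P 0
      else 1 with hF0
    have hC : ∀ i : Fin n, Commute (P 0) (P i.succ) := fun i => hcomm 0 i.succ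
    have hcE0'R : Commute E0' R.prod := by
      apply Commute.list_prod_right
      intro x hx
      rw [hR, List.mem_ofFn] at hx
      obtain ⟨i, rfl⟩ := hx
      exact ((((hC i).smul_left _).smul_right _).exp)
    have hcE0F : Commute E0 F.prod := by
      apply Commute.list_prod_right
      intro x hx
      rw [hF, List.mem_ofFn] at hx
      obtain ⟨i, rfl⟩ := hx
      exact commute_right_factor
        (((hC i).smul_left _).exp_left) _ _ _
    have hcF0F : Commute F0 F.prod := by
      apply Commute.list_prod_right
      intro x hx
      rw [hF, List.mem_ofFn] at hx
      obtain ⟨i, rfl⟩ := hx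
      rw [hF0]
      split
      · exact commute_right_factor
          (Commute.add_left ((Commute.one_left (P i.succ)).smul_left _)
            ((hC i).smul_left _)) _ _ _
      · exact Commute.one_left _
    have hkey := single_gate (P 0) X (hinv 0) (hcx 0) (θ 0)
    calc E0 * L.prod * X * (E0' * R.prod)
        = E0 * (L.prod * X * R.prod) * E0' := by
          rw [hcE0'R.eq]; simp only [mul_assoc]
      _ = E0 * (F.prod * X) * E0' := by rw [hIH]
      _ = F.prod * (E0 * X * E0') := by
          rw [← mul_assoc, ← mul_assoc, hcE0F.eq]; simp only [mul_assoc]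
      _ = F.prod * (F0 * X) := by rw [hkey]
      _ = F0 * F.prod * X := by rw [← mul_assoc, ← hcF0F.eq, mul_assoc]

end Aux

/-- **Heisenberg propagation through a commuting (IQP-type) circuit.**
For pairwise commuting involutive generators `P j` and an observable `X` that
commutes or anticommutes with each `P j`, conjugating `X` by
`U = Π_j exp(−(θ_j/2) i P_j)` multiplies `X` by `cos θ_j · I + i sin θ_j · P_j`
for exactly those `j` whose generator anticommutes with `X`. -/
theorem commuting_circuit_propagation
    (d g : ℕ) (hd : 1 ≤ d) (hg : 1 ≤ g)
    (P : Fin g → Matrix (Fin d) (Fin d) ℂ)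
    (hcomm : ∀ j l, P j * P l = P l * P j)
    (hinv : ∀ j, P j * P j = 1)
    (X : Matrix (Fin d) (Fin d) ℂ)
    (hcx : ∀ j, P j * X = X * P j ∨ P j * X = -(X * P j))
    (θ : Fin g → ℝ) :
    (List.ofFn fun j => exp (((θ j / 2 : ℂ) * Complex.I) • P j)).prod * X *
        (List.ofFn fun j => exp ((-(θ j / 2 : ℂ) * Complex.I) • P j)).prod =
      (List.ofFn fun j =>
          if P j * X = -(X * P j) then
            (Real.cos (θ j) : ℂ) • (1 : Matrix (Fin d) (Fin d) ℂ) +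
              (Complex.I * (Real.sin (θ j) : ℂ)) • P j
          else 1).prod * X :=
  main_aux X g P hcomm hinv hcx θ
end

section
/- Under the hypotheses of the commuting-circuit propagation rule — pairwise commuting d × d matrices P_j with P_j² = I (j = 1,…,g), a matrix X that commutes or anticommutes with each P_j, anticommuting index set S of cardinality M, angles θ_j, and U := Π_j exp(−(θ_j/2)·i·P_j) — the propagated observable admits the Pauli-path expansion: (Π_j exp((θ_j/2)·i·P_j)) · X · U = Σ_{r ∈ {0,1}^S} α(r) · ( Π_{j ∈ S} P_j^{r_j} ) · X, where α(r) := Π_{j ∈ S} (i·sin θ_j)^{r_j} · (cos θ_j)^{1 − r_j}. -/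
open NormedSpace

attribute [local instance] Classical.propDecidable

theorem exp_smul_involution_s11 {𝔸 : Type*} [NormedRing 𝔸] [NormedAlgebra ℂ 𝔸] [CompleteSpace 𝔸]
    (Pm : 𝔸) (h : Pm * Pm = 1) (z : ℂ) :
    exp ((z * Complex.I) • Pm) =
      Complex.cos z • (1 : 𝔸) + (Complex.sin z * Complex.I) • Pm := by
  have hPsq : Pm ^ 2 = 1 := by rw [sq, h]
  rw [exp_eq_tsum ℂ]
  refine HasSum.tsum_eq (HasSum.even_add_odd ?_ ?_)
  · have := (Complex.hasSum_cos' z).smul_const (1 : 𝔸)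
    convert this using 2 with k
    rw [smul_pow, pow_mul Pm, hPsq, one_pow, smul_smul]
    congr 1
    rw [pow_mul]
    ring
  · have := ((Complex.hasSum_sin' z).mul_right Complex.I).smul_const Pm
    convert this using 2 with k
    rw [smul_pow, pow_succ Pm, pow_mul Pm, hPsq, one_pow, one_mul, smul_smul]
    congr 1
    rw [div_mul_cancel₀ _ Complex.I_ne_zero, pow_succ, pow_mul]
    ring

theorem matrix_exp_smul_involution {m : Type*} [Fintype m] [DecidableEq m]
    (Pm : Matrix m m ℂ) (h : Pm * Pm = 1) (z : ℂ) :
    exp ((z * Complex.I) • Pm) =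
      Complex.cos z • (1 : Matrix m m ℂ) + (Complex.sin z * Complex.I) • Pm := by
  letI : SeminormedRing (Matrix m m ℂ) := Matrix.linftyOpSemiNormedRing
  letI : NormedRing (Matrix m m ℂ) := Matrix.linftyOpNormedRing
  letI : NormedAlgebra ℂ (Matrix m m ℂ) := Matrix.linftyOpNormedAlgebra
  exact exp_smul_involution_s11 Pm h z

theorem list_semiconj {M ι : Type*} [Monoid M] (X : M) (F G : ι → M)
    (h : ∀ i, X * F i = G i * X) :
    ∀ l : List ι, X * (l.map F).prod = (l.map G).prod * X := by
  intro l
  induction l with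
  | nil => simp
  | cons a l ih =>
      simp only [List.map_cons, List.prod_cons, ← mul_assoc, h a]
      rw [mul_assoc (G a), ih, mul_assoc]

theorem list_prod_zip {M ι : Type*} [Monoid M] (E G : ι → M)
    (h : ∀ i j, Commute (G i) (E j)) :
    ∀ l : List ι, (l.map E).prod * (l.map G).prod = (l.map fun i => E i * G i).prod := by
  intro l
  induction l with
  | nil => simp
  | cons a l ih =>
      simp only [List.map_cons, List.prod_cons]
      have hc : Commute (G a) ((l.map E).prod) :=
        Commute.list_prod_right _ _ (by
          intro x hx
          obtain ⟨j, hj, rfl⟩ := List.mem_map.1 hx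
          exact h a j)
      calc E a * (l.map E).prod * (G a * (l.map G).prod)
          = E a * ((l.map E).prod * G a) * (l.map G).prod := by
            simp only [mul_assoc]
        _ = E a * (G a * (l.map E).prod) * (l.map G).prod := by rw [← hc.eq]
        _ = E a * G a * ((l.map E).prod * (l.map G).prod) := by simp only [mul_assoc]
        _ = _ := by rw [ih]

theorem mul_expand {M : Type*} [Ring M] [Algebra ℂ M]
    (Pm : M) (h : Pm * Pm = 1) (a b a' b' : ℂ) :
    (a • (1 : M) + b • Pm) * (a' • (1 : M) + b' • Pm)
      = (a * a' + b * b') • (1 : M) + (a * b' + b * a') • Pm := by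
  simp only [mul_add, add_mul, smul_mul_smul_comm, one_mul, mul_one, h]
  module

theorem mul_expand2 {M : Type*} [Ring M] [Algebra ℂ M]
    (Pi Pj : M) (a b a' b' : ℂ) :
    (a • (1 : M) + b • Pi) * (a' • (1 : M) + b' • Pj)
      = (a * a') • (1 : M) + (a * b') • Pj + (b * a') • Pi + (b * b') • (Pi * Pj) := by
  simp only [mul_add, add_mul, smul_mul_smul_comm, one_mul, mul_one]
  module

theorem pauli_expansion {ι M : Type*} [DecidableEq ι] [Ring M] [Algebra ℂ M]
    (Q : ι → M) (c s : ι → ℂ) :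
    ∀ (l : List ι), l.Nodup → ∀ S' : Finset ι, (∀ x ∈ S', x ∈ l) →
      (l.map fun j => if j ∈ S' then c j • (1 : M) + s j • Q j else 1).prod =
        ∑ T ∈ S'.powerset,
          ((∏ j ∈ T, s j) * ∏ j ∈ S' \ T, c j) •
            (l.map fun j => if j ∈ T then Q j else 1).prod := by
  intro l
  induction l with
  | nil =>
    intro _ S' hsub
    have hS0 : S' = ∅ := Finset.eq_empty_of_forall_notMem (fun x hx => by simpa using hsub x hx)
    subst hS0
    simp
  | cons a l ih =>
    intro hnd S' hsub
    rw [List.nodup_cons] at hnd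
    obtain ⟨hal, hl⟩ := hnd
    by_cases ha : a ∈ S'
    · set S'' := S'.erase a with hS''
      have ha2 : a ∉ S'' := Finset.notMem_erase a S'
      have hins : insert a S'' = S' := Finset.insert_erase ha
      have hsub'' : ∀ x ∈ S'', x ∈ l := by
        intro x hx
        have hxa : x ≠ a := Finset.ne_of_mem_erase hx
        have h2 := hsub x (Finset.mem_of_mem_erase hx)
        simpa [hxa] using h2
      have hmapE : (l.map fun j => if j ∈ S' then c j • (1 : M) + s j • Q j else 1)
          = l.map fun j => if j ∈ S'' then c j • (1 : M) + s j • Q j else 1 := by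
        refine List.map_congr_left ?_
        intro x hx
        have hxa : x ≠ a := fun h => hal (h ▸ hx)
        simp [hS'', Finset.mem_erase, hxa]
      have hmapP : ∀ T : Finset ι, (l.map fun j => if j ∈ insert a T then Q j else 1)
          = l.map fun j => if j ∈ T then Q j else 1 := by
        intro T
        refine List.map_congr_left ?_
        intro x hx
        have hxa : x ≠ a := fun h => hal (h ▸ hx)
        simp [Finset.mem_insert, hxa]
      have key : ∀ T ∈ S''.powerset,
          (c a • (1 : M) + s a • Q a) * (((∏ j ∈ T, s j) * ∏ j ∈ S'' \ T, c j) •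
              (l.map fun j => if j ∈ T then Q j else 1).prod)
            = ((∏ j ∈ T, s j) * ∏ j ∈ insert a S'' \ T, c j) •
                ((a :: l).map fun j => if j ∈ T then Q j else 1).prod
              + ((∏ j ∈ insert a T, s j) * ∏ j ∈ insert a S'' \ insert a T, c j) •
                ((a :: l).map fun j => if j ∈ insert a T then Q j else 1).prod := by
        intro T hT
        rw [Finset.mem_powerset] at hT
        have haT : a ∉ T := fun h => ha2 (hT h)
        have h1 : insert a S'' \ T = insert a (S'' \ T) := by
          ext x
          by_cases hxa : x = a
          · subst hxa; simp [haT]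
          · simp [Finset.mem_sdiff, Finset.mem_insert, hxa]
        have h2 : insert a S'' \ insert a T = S'' \ T := by
          ext x
          by_cases hxa : x = a
          · subst hxa; simp [ha2]
          · simp [Finset.mem_sdiff, Finset.mem_insert, hxa]
        have haSdT : a ∉ S'' \ T := fun h => ha2 (Finset.mem_sdiff.1 h).1
        rw [h1, h2, Finset.prod_insert haSdT, Finset.prod_insert haT,
          List.map_cons, List.prod_cons, if_neg haT, one_mul,
          List.map_cons, List.prod_cons, if_pos (Finset.mem_insert_self a T), hmapP T]
        rw [add_mul, smul_mul_assoc, one_mul, smul_mul_assoc, mul_smul_comm, smul_smul, smul_smul]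
        module
      rw [List.map_cons, List.prod_cons, if_pos ha, hmapE, ih hl S'' hsub'',
        Finset.mul_sum, ← hins, Finset.sum_powerset_insert ha2,
        Finset.sum_congr rfl key, Finset.sum_add_distrib]
    · have hsub' : ∀ x ∈ S', x ∈ l := by
        intro x hx
        have hxa : x ≠ a := fun h => ha (h ▸ hx)
        have h2 := hsub x hx
        simpa [hxa] using h2
      rw [List.map_cons, List.prod_cons, if_neg ha, one_mul, ih hl S' hsub']
      refine Finset.sum_congr rfl fun T hT => ?_
      have haT : a ∉ T := fun h => ha (Finset.mem_powerset.1 hT h)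
      rw [List.map_cons, List.prod_cons, if_neg haT, one_mul]

/-- **Pauli-path expansion of the propagated observable.**
Under the commuting-circuit propagation hypotheses, with `S` the set of indices
of generators anticommuting with `X`, the Heisenberg-propagated observable expands
as `∑_{r ∈ {0,1}^S} α(r) (Π_{j∈S} P_j^{r_j}) X`, with
`α(r) = Π_{j∈S} (i sin θ_j)^{r_j} (cos θ_j)^{1−r_j}` (flip-vectors `r` are
identified with the subsets `T ⊆ S` of flipped indices). -/
theorem commuting_circuit_pauli_path_expansion
    (d g : ℕ) (hd : 1 ≤ d) (hg : 1 ≤ g)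
    (P : Fin g → Matrix (Fin d) (Fin d) ℂ)
    (hcomm : ∀ j l, P j * P l = P l * P j)
    (hinv : ∀ j, P j * P j = 1)
    (X : Matrix (Fin d) (Fin d) ℂ)
    (hcx : ∀ j, P j * X = X * P j ∨ P j * X = -(X * P j))
    (θ : Fin g → ℝ)
    (S : Finset (Fin g))
    (hS : S = Finset.univ.filter (fun j => P j * X = -(X * P j))) :
    (List.ofFn fun j => exp (((θ j / 2 : ℂ) * Complex.I) • P j)).prod * X *
        (List.ofFn fun j => exp ((-(θ j / 2 : ℂ) * Complex.I) • P j)).prod =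
      ∑ T ∈ S.powerset,
        ((∏ j ∈ T, (Complex.I * (Real.sin (θ j) : ℂ))) *
            ∏ j ∈ S \ T, (Real.cos (θ j) : ℂ)) •
          ((List.ofFn fun j =>
              if j ∈ T then P j else (1 : Matrix (Fin d) (Fin d) ℂ)).prod * X) := by
  set E : Fin g → Matrix (Fin d) (Fin d) ℂ := fun j =>
    Complex.cos (θ j / 2 : ℂ) • (1 : Matrix (Fin d) (Fin d) ℂ)
      + (Complex.sin (θ j / 2 : ℂ) * Complex.I) • P j with hEdef
  set F : Fin g → Matrix (Fin d) (Fin d) ℂ := fun j =>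
    Complex.cos (θ j / 2 : ℂ) • (1 : Matrix (Fin d) (Fin d) ℂ)
      + (-(Complex.sin (θ j / 2 : ℂ) * Complex.I)) • P j with hFdef
  set G : Fin g → Matrix (Fin d) (Fin d) ℂ := fun j => if j ∈ S then E j else F j with hGdef
  have hE : ∀ j, exp (((θ j / 2 : ℂ) * Complex.I) • P j) = E j := fun j =>
    matrix_exp_smul_involution (P j) (hinv j) _
  have hF : ∀ j, exp ((-(θ j / 2 : ℂ) * Complex.I) • P j) = F j := by
    intro j
    rw [matrix_exp_smul_involution (P j) (hinv j) (-(θ j / 2 : ℂ)), hFdef]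
    rw [Complex.cos_neg, Complex.sin_neg, neg_mul]
  have hanti : ∀ j ∈ S, P j * X = -(X * P j) := by
    intro j hj; rw [hS] at hj; exact (Finset.mem_filter.1 hj).2
  have hcomm' : ∀ j, j ∉ S → P j * X = X * P j := by
    intro j hj
    rcases hcx j with h | h
    · exact h
    · exact absurd (hS ▸ Finset.mem_filter.2 ⟨Finset.mem_univ j, h⟩) hj
  have hmix : ∀ (i j : Fin g) (α β γ δ : ℂ),
      Commute (α • (1 : Matrix (Fin d) (Fin d) ℂ) + β • P i)
        (γ • (1 : Matrix (Fin d) (Fin d) ℂ) + δ • P j) := by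
    intro i j α β γ δ
    unfold Commute SemiconjBy
    rw [mul_expand2 (P i) (P j), mul_expand2 (P j) (P i), hcomm i j]
    module
  have hGE : ∀ i j, Commute (G i) (E j) := by
    intro i j
    rw [hGdef]
    by_cases h : i ∈ S <;>
      simp only [h, if_true, if_false, hEdef, hFdef] <;> exact hmix ..
  have hXF : ∀ j, X * F j = G j * X := by
    intro j
    rw [hFdef, hGdef]
    by_cases h : j ∈ S
    · simp only [h, if_true, hEdef]
      rw [mul_add, add_mul, mul_smul_comm, mul_one, smul_mul_assoc, one_mul,
        mul_smul_comm, smul_mul_assoc, hanti j h]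
      module
    · simp only [h, if_false]
      rw [mul_add, add_mul, mul_smul_comm, mul_one, smul_mul_assoc, one_mul,
        mul_smul_comm, smul_mul_assoc, hcomm' j h]
  have hEG : (fun j => E j * G j) = fun j =>
      if j ∈ S then ((Real.cos (θ j) : ℂ) • (1 : Matrix (Fin d) (Fin d) ℂ) +
        (Complex.I * (Real.sin (θ j) : ℂ)) • P j) else 1 := by
    funext j
    have hcos2 : (Real.cos (θ j) : ℂ)
        = Complex.cos ((θ j : ℂ) / 2) ^ 2 - Complex.sin ((θ j : ℂ) / 2) ^ 2 := by
      rw [Complex.ofReal_cos, ← Complex.cos_two_mul']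
      congr 1
      ring
    have hsin2 : (Real.sin (θ j) : ℂ)
        = 2 * Complex.sin ((θ j : ℂ) / 2) * Complex.cos ((θ j : ℂ) / 2) := by
      rw [Complex.ofReal_sin, ← Complex.sin_two_mul]
      congr 1
      ring
    by_cases h : j ∈ S
    · simp only [hGdef, h, if_true, hEdef]
      rw [mul_expand (P j) (hinv j)]
      congr 1
      · congr 1
        linear_combination -hcos2 + Complex.sin ((θ j : ℂ) / 2) ^ 2 * Complex.I_sq
      · congr 1
        linear_combination -Complex.I * hsin2
    · simp only [hGdef, h, if_false, hEdef, hFdef]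
      rw [mul_expand (P j) (hinv j)]
      have h1 : Complex.cos ((θ j : ℂ) / 2) * Complex.cos ((θ j : ℂ) / 2)
          + Complex.sin ((θ j : ℂ) / 2) * Complex.I
            * -(Complex.sin ((θ j : ℂ) / 2) * Complex.I) = 1 := by
        linear_combination Complex.cos_sq_add_sin_sq ((θ j : ℂ) / 2)
          - Complex.sin ((θ j : ℂ) / 2) ^ 2 * Complex.I_sq
      have h2 : Complex.cos ((θ j : ℂ) / 2) * -(Complex.sin ((θ j : ℂ) / 2) * Complex.I)
          + Complex.sin ((θ j : ℂ) / 2) * Complex.I * Complex.cos ((θ j : ℂ) / 2) = 0 := by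
        ring
      rw [h1, h2, one_smul, zero_smul, add_zero]
  simp only [hE, hF, List.ofFn_eq_map]
  rw [mul_assoc, list_semiconj X F G hXF, ← mul_assoc, list_prod_zip E G hGE, hEG]
  rw [pauli_expansion P (fun j => (Real.cos (θ j) : ℂ))
      (fun j => Complex.I * (Real.sin (θ j) : ℂ)) (List.finRange g)
      (List.nodup_finRange g) S (fun x _ => List.mem_finRange x)]
  rw [Finset.sum_mul]
  simp only [smul_mul_assoc]
end

section
/- Let n ≥ 1, let i ⊆ {1,…,n} be nonempty, and let X_i be the Pauli-X string on i (Kronecker product with X at positions in i and I elsewhere). Let S_1, …, S_M ⊆ {1,…,n} be subsets each having odd intersection with i (so that the Z-strings Z_{S_j} anticommute with X_i), let θ_1,…,θ_M be real angles, and set U_c := Π_{j=1}^{M} exp(−(θ_j/2)·i·Z_{S_j}). Then ⟨+|^{⊗n} U_c† X_i U_c |+⟩^{⊗n} = Σ_{r ∈ R} Π_{j=1}^{M} (i·sin θ_j)^{r_j} (cos θ_j)^{1 − r_j}, where R ⊆ {0,1}^M is the set of flip-vectors r such that for every qubit q ∈ {1,…,n}, the number Σ_{j : q ∈ S_j} r_j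 of Z-flips received by q is even. -/
open NormedSpace

noncomputable section

/-- The Pauli `X` matrix `[[0,1],[1,0]]`, indexed by `ZMod 2`. -/
def pauliX : Matrix (ZMod 2) (ZMod 2) ℂ :=
  Matrix.of fun a b => if a = b then 0 else 1

/-- The Pauli `Z` matrix `[[1,0],[0,−1]]`, indexed by `ZMod 2`. -/
def pauliZ : Matrix (ZMod 2) (ZMod 2) ℂ :=
  Matrix.of fun a b => if a = b then (if a = 0 then 1 else -1) else 0

/-- The `n`-fold Kronecker product of `2 × 2` matrices. -/
def kron {n : ℕ} (M : Fin n → Matrix (ZMod 2) (ZMod 2) ℂ) :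
    Matrix (Fin n → ZMod 2) (Fin n → ZMod 2) ℂ :=
  Matrix.of fun x y => ∏ i, M i (x i) (y i)

/-- The Pauli-`Z` string `Z_S`. -/
def pauliZString {n : ℕ} (S : Finset (Fin n)) :
    Matrix (Fin n → ZMod 2) (Fin n → ZMod 2) ℂ :=
  kron (fun i => if i ∈ S then pauliZ else 1)

/-- The Pauli-`X` string `X_S`. -/
def pauliXString {n : ℕ} (S : Finset (Fin n)) :
    Matrix (Fin n → ZMod 2) (Fin n → ZMod 2) ℂ :=
  kron (fun i => if i ∈ S then pauliX else 1)

/-- The `n`-qubit plus state `|+⟩^{⊗n}`. -/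
def plusVec (n : ℕ) : (Fin n → ZMod 2) → ℂ :=
  fun _ => ((Real.sqrt 2 : ℂ))⁻¹ ^ n


/-! ### Auxiliary definitions and lemmas -/

/-- The sign `(-1)^b` of a bit. -/
def sgn (b : ZMod 2) : ℂ := if b = 0 then 1 else -1

/-- The indicator bit-vector of a subset. -/
def chi {n : ℕ} (iset : Finset (Fin n)) : Fin n → ZMod 2 :=
  fun q => if q ∈ iset then 1 else 0

/-- The eigenvalue of `Z_S` on the basis state `x`. -/
def eps {n : ℕ} (S : Finset (Fin n)) (x : Fin n → ZMod 2) : ℂ :=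
  ∏ q ∈ S, sgn (x q)

lemma zmod2_cases (a : ZMod 2) : a = 0 ∨ a = 1 := by
  fin_cases a
  · exact Or.inl rfl
  · exact Or.inr rfl

lemma zmod2_one_one : (1 + 1 : ZMod 2) = 0 := by decide

lemma sgn_zero : sgn 0 = 1 := if_pos rfl
lemma sgn_one : sgn 1 = -1 := if_neg (by decide)

lemma sgn_conj (b : ZMod 2) : (starRingEnd ℂ) (sgn b) = sgn b := by
  unfold sgn; split <;> simp

lemma sgn_add (a b : ZMod 2) : sgn (a + b) = sgn a * sgn b := by
  rcases zmod2_cases a with rfl | rfl <;> rcases zmod2_cases b with rfl | rfl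
  · rw [add_zero, sgn_zero, one_mul]
  · rw [zero_add, sgn_zero, one_mul]
  · rw [add_zero, sgn_zero, mul_one]
  · rw [zmod2_one_one, sgn_zero, sgn_one]; norm_num

lemma eps_conj {n : ℕ} (S : Finset (Fin n)) (x : Fin n → ZMod 2) :
    (starRingEnd ℂ) (eps S x) = eps S x := by
  unfold eps; rw [map_prod]; exact Finset.prod_congr rfl fun q _ => sgn_conj _

lemma eps_pm {n : ℕ} (S : Finset (Fin n)) (x : Fin n → ZMod 2) :
    eps S x = 1 ∨ eps S x = -1 := by
  unfold eps
  refine Finset.prod_induction _ (fun a => a = 1 ∨ a = -1) ?_ (Or.inl rfl) ?_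
  · rintro a b (rfl | rfl) (rfl | rfl) <;> norm_num
  · intro q _; unfold sgn; split
    · exact Or.inl rfl
    · exact Or.inr rfl

lemma eps_flip {n : ℕ} (S iset : Finset (Fin n)) (hodd : Odd ((S ∩ iset).card))
    (x : Fin n → ZMod 2) :
    eps S (x + chi iset) = - eps S x := by
  unfold eps
  have h1 : ∀ q ∈ S, sgn ((x + chi iset) q)
      = (if q ∈ iset then (-1 : ℂ) else 1) * sgn (x q) := by
    intro q _
    simp only [Pi.add_apply, chi]
    rw [sgn_add, mul_comm]
    congr 1
    split <;> simp [sgn]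
  rw [Finset.prod_congr rfl h1, Finset.prod_mul_distrib]
  have h2 : (∏ q ∈ S, if q ∈ iset then (-1 : ℂ) else 1)
      = (-1) ^ ((S ∩ iset).card) := by
    rw [← Finset.prod_filter, Finset.prod_const, Finset.filter_mem_eq_inter]
  rw [h2, hodd.neg_one_pow, neg_one_mul]

lemma pauliX_apply (a b : ZMod 2) : pauliX a b = if b = a + 1 then 1 else 0 := by
  unfold pauliX
  simp only [Matrix.of_apply]
  have ne01 : (0:ZMod 2) ≠ 1 := by decide
  have ne10 : (1:ZMod 2) ≠ 0 := by decide
  rcases zmod2_cases a with rfl | rfl <;> rcases zmod2_cases b with rfl | rfl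
  · rw [if_pos rfl, zero_add, if_neg ne01]
  · rw [if_neg ne01, zero_add, if_pos rfl]
  · rw [if_neg ne10, zmod2_one_one, if_pos rfl]
  · rw [if_pos rfl, zmod2_one_one, if_neg ne10]

lemma one_apply' (a b : ZMod 2) :
    (1 : Matrix (ZMod 2) (ZMod 2) ℂ) a b = if b = a + 0 then 1 else 0 := by
  rw [Matrix.one_apply, add_zero]
  by_cases h : a = b
  · simp [h]
  · rw [if_neg h, if_neg (Ne.symm h)]

lemma pauliXString_apply {n : ℕ} (iset : Finset (Fin n)) (x y : Fin n → ZMod 2) :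
    pauliXString iset x y = if y = x + chi iset then 1 else 0 := by
  simp only [pauliXString, kron, Matrix.of_apply]
  have h : ∀ q : Fin n, (if q ∈ iset then pauliX else 1) (x q) (y q)
      = if y q = x q + chi iset q then (1:ℂ) else 0 := by
    intro q
    by_cases hq : q ∈ iset
    · rw [if_pos hq]
      unfold chi
      rw [if_pos hq, pauliX_apply]
    · rw [if_neg hq]
      unfold chi
      rw [if_neg hq, one_apply']
  rw [Finset.prod_congr rfl fun q _ => h q, Finset.prod_boole]
  congr 1
  simp only [eq_iff_iff]
  constructor
  · intro hh; funext q; exact hh q (Finset.mem_univ q)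
  · intro hh q _; rw [hh]; rfl

lemma pauliZString_diag {n : ℕ} (S : Finset (Fin n)) :
    pauliZString S = Matrix.diagonal (fun x => eps S x) := by
  ext x y
  simp only [pauliZString, kron, Matrix.of_apply, Matrix.diagonal_apply]
  by_cases h : x = y
  · subst h
    simp only [if_pos rfl]
    rw [← Finset.prod_filter_mul_prod_filter_not Finset.univ (· ∈ S)]
    have h1 : ∀ q ∈ Finset.univ.filter (· ∈ S),
        (if q ∈ S then pauliZ else 1) (x q) (x q) = sgn (x q) := by
      intro q hq
      simp only [Finset.mem_filter] at hq
      simp [hq.2, pauliZ, sgn]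
    have h2 : ∀ q ∈ Finset.univ.filter (¬ · ∈ S),
        (if q ∈ S then pauliZ else 1) (x q) (x q) = 1 := by
      intro q hq
      simp only [Finset.mem_filter] at hq
      simp [hq.2, Matrix.one_apply]
    rw [Finset.prod_congr rfl h1, Finset.prod_congr rfl h2, Finset.prod_const_one,
      mul_one, if_pos trivial]
    unfold eps
    congr 1
    ext q
    simp
  · rw [if_neg h]
    obtain ⟨q, hq⟩ : ∃ q, x q ≠ y q := by
      by_contra hc; push_neg at hc; exact h (funext hc)
    refine Finset.prod_eq_zero (Finset.mem_univ q) ?_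
    split <;> simp [pauliZ, Matrix.one_apply, hq, if_neg hq]

lemma diagonal_list_prod {m α : Type*} [Fintype m] [DecidableEq m] [CommRing α]
    (l : List (m → α)) :
    (l.map Matrix.diagonal).prod = Matrix.diagonal l.prod := by
  induction l with
  | nil =>
      simp only [List.map_nil, List.prod_nil]
      ext i j
      simp [Matrix.diagonal_apply, Matrix.one_apply]
  | cons a t ih => simp [ih, Matrix.diagonal_mul_diagonal]

lemma exp_smul_diag {m : Type*} [Fintype m] [DecidableEq m] (c : ℂ) (v : m → ℂ) :
    exp (c • Matrix.diagonal v) = Matrix.diagonal (fun x => Complex.exp (c * v x)) := by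
  rw [← Matrix.diagonal_smul, Matrix.exp_diagonal]
  suffices h : (exp (c • v) : m → ℂ) = fun x => Complex.exp (c * v x) by rw [h]
  funext x
  rw [Pi.coe_exp (c • v) x, Pi.smul_apply, smul_eq_mul, Complex.exp_eq_exp_ℂ]

/-- **Closed-form Pauli-propagation surrogate for a Z-type IQP circuit.**
With `U_c = Π_j exp(−(θ_j/2) i Z_{S_j})` where every `S_j` has odd intersection
with the nonempty support `i` of the observable `X_i`, the plus-state expectation
`⟨+|^{⊗n} U_c† X_i U_c |+⟩^{⊗n}` equals the sum over flip-vectors `r` in which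
every qubit receives an even number of Z-flips of the trigonometric weights
`Π_j (i sin θ_j)^{r_j} (cos θ_j)^{1−r_j}`. -/
theorem iqp_pauli_propagation_closed_form
    (n M : ℕ) (hn : 1 ≤ n) (iset : Finset (Fin n)) (hiset : iset.Nonempty)
    (S : Fin M → Finset (Fin n)) (hodd : ∀ j, Odd ((S j) ∩ iset).card)
    (θ : Fin M → ℝ)
    (Uc : Matrix (Fin n → ZMod 2) (Fin n → ZMod 2) ℂ)
    (hUc : Uc = (List.ofFn fun j =>
      exp ((-(θ j / 2 : ℂ) * Complex.I) • pauliZString (S j))).prod) :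
    ∑ x : Fin n → ZMod 2,
        (starRingEnd ℂ) (plusVec n x) *
          ((Uc.conjTranspose * pauliXString iset * Uc).mulVec (plusVec n) x) =
      ∑ r ∈ Finset.univ.filter (fun r : Fin M → Bool =>
          ∀ q : Fin n,
            Even ((Finset.univ.filter (fun j => q ∈ S j ∧ r j = true)).card)),
        ∏ j : Fin M,
          (if r j then Complex.I * (Real.sin (θ j) : ℂ)
           else (Real.cos (θ j) : ℂ)) := by
  classical
  set D : (Fin n → ZMod 2) → ℂ :=
    fun x => ∏ j, Complex.exp (-(θ j / 2 : ℂ) * Complex.I * eps (S j) x) with hD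
  -- U_c is diagonal
  have hUcD : Uc = Matrix.diagonal D := by
    rw [hUc]
    have h1 : (List.ofFn fun j =>
        exp ((-(θ j / 2 : ℂ) * Complex.I) • pauliZString (S j)))
        = (List.ofFn (fun j => fun x =>
            Complex.exp (-(θ j / 2 : ℂ) * Complex.I * eps (S j) x))).map
              Matrix.diagonal := by
      rw [List.map_ofFn]
      congr 1
      funext j
      rw [pauliZString_diag, exp_smul_diag]
      rfl
    have h2 : (List.ofFn (fun j => fun x =>
        Complex.exp (-(θ j / 2 : ℂ) * Complex.I * eps (S j) x))).prod = D := by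
      rw [List.prod_ofFn]
      funext x
      rw [Finset.prod_apply]
    rw [h1, diagonal_list_prod, h2]
  -- entries of the conjugated observable
  have hA : ∀ x y, (Uc.conjTranspose * pauliXString iset * Uc) x y
      = (starRingEnd ℂ) (D x) * pauliXString iset x y * D y := by
    intro x y
    rw [hUcD, Matrix.diagonal_conjTranspose, Matrix.mul_diagonal,
      Matrix.diagonal_mul, Pi.star_apply]
    rfl
  -- the matrix-vector product
  have hmv : ∀ x, (Uc.conjTranspose * pauliXString iset * Uc).mulVec (plusVec n) x
      = (starRingEnd ℂ) (D x) * D (x + chi iset) * ((Real.sqrt 2 : ℂ))⁻¹ ^ n := by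
    intro x
    unfold Matrix.mulVec dotProduct
    rw [Finset.sum_eq_single (x + chi iset)]
    · show (Uc.conjTranspose * pauliXString iset * Uc) x (x + chi iset) *
          plusVec n (x + chi iset) = _
      rw [hA, pauliXString_apply, if_pos rfl, mul_one]
      rfl
    · intro y _ hy
      show (Uc.conjTranspose * pauliXString iset * Uc) x y * plusVec n y = 0
      rw [hA, pauliXString_apply, if_neg hy, mul_zero, zero_mul, zero_mul]
    · intro h; exact absurd (Finset.mem_univ _) h
  -- the phase collapse
  have key : ∀ x, (starRingEnd ℂ) (D x) * D (x + chi iset)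
      = ∏ j, Complex.exp ((θ j : ℂ) * Complex.I * eps (S j) x) := by
    intro x
    rw [hD, map_prod, ← Finset.prod_mul_distrib]
    refine Finset.prod_congr rfl fun j _ => ?_
    rw [eps_flip (S j) iset (hodd j) x, ← Complex.exp_conj, ← Complex.exp_add]
    congr 1
    rw [map_mul, map_mul, eps_conj, Complex.conj_I]
    have hth : (starRingEnd ℂ) (-(θ j / 2 : ℂ)) = -(θ j / 2 : ℂ) := by
      rw [map_neg, map_div₀, Complex.conj_ofReal, map_ofNat]
    rw [hth]
    ring
  -- trig expansion of each factor
  have expand : ∀ j (x : Fin n → ZMod 2),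
      Complex.exp ((θ j : ℂ) * Complex.I * eps (S j) x)
      = (Real.cos (θ j) : ℂ) + eps (S j) x * (Complex.I * (Real.sin (θ j) : ℂ)) := by
    intro j x
    rcases eps_pm (S j) x with h | h <;> rw [h]
    · rw [mul_one, one_mul, Complex.exp_mul_I, ← Complex.ofReal_cos,
        ← Complex.ofReal_sin]
      ring
    · have h2 : (θ j : ℂ) * Complex.I * (-1) = ((-(θ j) : ℝ) : ℂ) * Complex.I := by
        push_cast; ring
      rw [h2, Complex.exp_mul_I, Complex.ofReal_neg, Complex.cos_neg,
        Complex.sin_neg, ← Complex.ofReal_cos, ← Complex.ofReal_sin]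
      ring
  -- expand product over j into sum over flip vectors
  have hsum : ∀ x : Fin n → ZMod 2,
      (∏ j, ((Real.cos (θ j) : ℂ) + eps (S j) x * (Complex.I * (Real.sin (θ j) : ℂ))))
      = ∑ r : Fin M → Bool, ∏ j,
          (if r j then eps (S j) x * (Complex.I * (Real.sin (θ j) : ℂ))
           else (Real.cos (θ j) : ℂ)) := by
    intro x
    rw [← Fintype.prod_sum
      (fun j (b : Bool) => if b then eps (S j) x * (Complex.I * (Real.sin (θ j) : ℂ))
        else (Real.cos (θ j) : ℂ))]
    refine Finset.prod_congr rfl fun j _ => ?_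
    rw [Fintype.sum_bool, if_pos rfl, if_neg (by simp)]
    ring
  -- separation of weights and signs
  have hsplit : ∀ (r : Fin M → Bool) (x : Fin n → ZMod 2),
      (∏ j, (if r j then eps (S j) x * (Complex.I * (Real.sin (θ j) : ℂ))
           else (Real.cos (θ j) : ℂ)))
      = (∏ j, (if r j then Complex.I * (Real.sin (θ j) : ℂ)
           else (Real.cos (θ j) : ℂ)))
        * ∏ j, (if r j then eps (S j) x else 1) := by
    intro r x
    rw [← Finset.prod_mul_distrib]
    refine Finset.prod_congr rfl fun j _ => ?_
    cases hrj : r j <;> simp [hrj]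
    ring
  -- the character sum
  have hE : ∀ r : Fin M → Bool,
      (∑ x : Fin n → ZMod 2, ∏ j, (if r j then eps (S j) x else 1))
      = ∏ q : Fin n,
          ((1:ℂ) + (-1) ^ (Finset.univ.filter (fun j => q ∈ S j ∧ r j = true)).card) := by
    intro r
    have h1 : ∀ x : Fin n → ZMod 2, (∏ j, (if r j then eps (S j) x else 1))
        = ∏ q : Fin n,
            (sgn (x q)) ^ (Finset.univ.filter (fun j => q ∈ S j ∧ r j = true)).card := by
      intro x
      calc (∏ j, (if r j then eps (S j) x else 1))
          = ∏ j, ∏ q : Fin n, (if q ∈ S j ∧ r j = true then sgn (x q) else 1) := by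
            refine Finset.prod_congr rfl fun j _ => ?_
            cases hrj : r j
            · simp [hrj]
            · simp only [hrj, and_true]
              unfold eps
              rw [Finset.prod_ite_mem, Finset.univ_inter, if_pos trivial]
        _ = ∏ q : Fin n, ∏ j, (if q ∈ S j ∧ r j = true then sgn (x q) else 1) :=
            Finset.prod_comm
        _ = _ := by
            refine Finset.prod_congr rfl fun q _ => ?_
            rw [← Finset.prod_filter, Finset.prod_const]
    rw [Finset.sum_congr rfl fun x _ => h1 x, ← Fintype.prod_sum
      (fun q (b : ZMod 2) => sgn b ^ (Finset.univ.filter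
        (fun j => q ∈ S j ∧ r j = true)).card)]
    refine Finset.prod_congr rfl fun q _ => ?_
    rw [show (Finset.univ : Finset (ZMod 2)) = {0, 1} from by decide,
      Finset.sum_pair (show (0 : ZMod 2) ≠ 1 from by decide), sgn_zero, sgn_one,
      one_pow]
  -- put everything together
  have hplus : ∀ x, (starRingEnd ℂ) (plusVec n x) = ((Real.sqrt 2 : ℂ))⁻¹ ^ n := by
    intro x
    unfold plusVec
    rw [map_pow, map_inv₀, Complex.conj_ofReal]
  have hcc : ((Real.sqrt 2 : ℂ))⁻¹ ^ n * ((Real.sqrt 2 : ℂ))⁻¹ ^ n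
      = ((2 : ℂ) ^ n)⁻¹ := by
    rw [← mul_pow, ← mul_inv, ← Complex.ofReal_mul,
      Real.mul_self_sqrt (by norm_num), inv_pow]
    norm_num
  calc ∑ x : Fin n → ZMod 2, (starRingEnd ℂ) (plusVec n x) *
          ((Uc.conjTranspose * pauliXString iset * Uc).mulVec (plusVec n) x)
      = ∑ x : Fin n → ZMod 2, ((2:ℂ)^n)⁻¹ *
          ∑ r : Fin M → Bool,
            (∏ j, (if r j then Complex.I * (Real.sin (θ j) : ℂ)
                 else (Real.cos (θ j) : ℂ)))
            * ∏ j, (if r j then eps (S j) x else 1) := by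
        refine Finset.sum_congr rfl fun x _ => ?_
        rw [hplus, hmv, key,
          Finset.prod_congr rfl fun j (_ : j ∈ Finset.univ) => expand j x,
          hsum x, Finset.sum_congr rfl fun r (_ : r ∈ Finset.univ) => hsplit r x,
          ← hcc]
        ring
    _ = ∑ r : Fin M → Bool,
          (∏ j, (if r j then Complex.I * (Real.sin (θ j) : ℂ)
               else (Real.cos (θ j) : ℂ)))
          * (((2:ℂ)^n)⁻¹ * ∑ x : Fin n → ZMod 2, ∏ j, (if r j then eps (S j) x else 1)) := by
        simp only [Finset.mul_sum]
        rw [Finset.sum_comm]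
        exact Finset.sum_congr rfl fun r _ => Finset.sum_congr rfl fun x _ => by ring
    _ = ∑ r ∈ Finset.univ.filter (fun r : Fin M → Bool =>
          ∀ q : Fin n,
            Even ((Finset.univ.filter (fun j => q ∈ S j ∧ r j = true)).card)),
        ∏ j : Fin M,
          (if r j then Complex.I * (Real.sin (θ j) : ℂ)
           else (Real.cos (θ j) : ℂ)) := by
        rw [Finset.sum_filter]
        refine Finset.sum_congr rfl fun r _ => ?_
        rw [hE]
        by_cases hc : ∀ q : Fin n,
            Even ((Finset.univ.filter (fun j => q ∈ S j ∧ r j = true)).card)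
        · rw [if_pos hc]
          have : (∏ q : Fin n, ((1:ℂ) + (-1) ^ (Finset.univ.filter
              (fun j => q ∈ S j ∧ r j = true)).card)) = 2 ^ n := by
            have hq2 : ∀ q ∈ (Finset.univ : Finset (Fin n)),
                (1:ℂ) + (-1) ^ (Finset.univ.filter
                  (fun j => q ∈ S j ∧ r j = true)).card = 2 := fun q _ => by
              rw [(hc q).neg_one_pow]; norm_num
            rw [Finset.prod_congr rfl hq2, Finset.prod_const, Finset.card_univ,
              Fintype.card_fin]
          rw [this]
          field_simp
        · rw [if_neg hc]
          push_neg at hc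
          obtain ⟨q, hq⟩ := hc
          have : (∏ q : Fin n, ((1:ℂ) + (-1) ^ (Finset.univ.filter
              (fun j => q ∈ S j ∧ r j = true)).card)) = 0 := by
            refine Finset.prod_eq_zero (Finset.mem_univ q) ?_
            rw [(Nat.not_even_iff_odd.mp hq).neg_one_pow]
            ring
          rw [this, mul_zero, mul_zero]
end
end

section
/- Fix natural numbers n ≥ k ≥ 0. For real χ, define η_ℓ(χ) := 2(χ² − 1)/(4χ² − 1) and η_χ(χ) := 3χ/(4χ² − 1), and the 2×2 matrices T_F(χ) := [[η_ℓ, 0], [η_χ, 1]] and T_𝟙(χ) := [[1, η_χ], [0, η_ℓ]]. Then, as χ → ∞, the scalar (1 1) · T_F(χ)^k · T_𝟙(χ)^{n−k} · (1 1)ᵀ converges to 2^{−k} + 2^{k−n}. -/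
open Matrix Filter

lemma diagA (a b : ℝ) (m : ℕ) : !![a, (0:ℝ); 0, b] ^ m = !![a ^ m, 0; 0, b ^ m] := by
  induction m with
  | zero => simp [Matrix.one_fin_two]
  | succ m ih => rw [pow_succ, ih, Matrix.mul_fin_two]; ring_nf

/-- **Infinite-bond-dimension limit of the maximal Rényi-2 entropy of an RMPS.**
With `η_ℓ(χ) = 2(χ²−1)/(4χ²−1)`, `η_χ(χ) = 3χ/(4χ²−1)`,
`T_F = [[η_ℓ,0],[η_χ,1]]` and `T_𝟙 = [[1,η_χ],[0,η_ℓ]]`, the sum of all entries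
of `T_F^k · T_𝟙^{n−k}` tends to `2^{−k} + 2^{k−n}` as `χ → ∞`. -/
theorem rmps_renyi2_entropy_limit (n k : ℕ) (hk : k ≤ n) :
    Tendsto (fun χ : ℝ =>
        ![1, 1] ⬝ᵥ
          ((!![2 * (χ ^ 2 - 1) / (4 * χ ^ 2 - 1), 0;
               3 * χ / (4 * χ ^ 2 - 1), 1] ^ k *
            !![1, 3 * χ / (4 * χ ^ 2 - 1);
               0, 2 * (χ ^ 2 - 1) / (4 * χ ^ 2 - 1)] ^ (n - k)).mulVec ![1, 1]))
      atTop
      (nhds ((2 : ℝ) ^ (-(k : ℤ)) + (2 : ℝ) ^ ((k : ℤ) - (n : ℤ)))) := by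
  set F : ℝ × ℝ → ℝ := fun p =>
    ![1, 1] ⬝ᵥ ((!![p.1, 0; p.2, 1] ^ k * !![1, p.2; 0, p.1] ^ (n - k)).mulVec ![1, 1]) with hF
  have h1 : Continuous fun p : ℝ × ℝ => !![p.1, (0:ℝ); p.2, 1] := by
    apply continuous_matrix; intro i j
    fin_cases i <;> fin_cases j <;> simp <;> fun_prop
  have h2 : Continuous fun p : ℝ × ℝ => !![(1:ℝ), p.2; 0, p.1] := by
    apply continuous_matrix; intro i j
    fin_cases i <;> fin_cases j <;> simp <;> fun_prop
  have hcont : Continuous F :=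
    continuous_const.dotProduct
      (((h1.pow k).matrix_mul (h2.pow (n - k))).matrix_mulVec continuous_const)
  -- limits of the two rational functions
  have hx2 : Tendsto (fun χ : ℝ => χ ^ 2) atTop atTop := tendsto_pow_atTop two_ne_zero
  have hinv : Tendsto (fun χ : ℝ => 1 / χ ^ 2) atTop (nhds 0) := by
    simpa [one_div, Function.comp_def] using (tendsto_inv_atTop_zero.comp hx2)
  have hinv1 : Tendsto (fun χ : ℝ => 1 / χ) atTop (nhds 0) := by
    simpa [one_div] using tendsto_inv_atTop_zero
  have hden : Tendsto (fun χ : ℝ => 4 - 1 / χ ^ 2) atTop (nhds 4) := by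
    simpa using (tendsto_const_nhds (x := (4:ℝ))).sub hinv
  have hηℓ : Tendsto (fun χ : ℝ => 2 * (χ ^ 2 - 1) / (4 * χ ^ 2 - 1)) atTop (nhds (1/2)) := by
    have h : Tendsto (fun χ : ℝ => (2 - 2 / χ ^ 2) / (4 - 1 / χ ^ 2)) atTop (nhds (1/2)) := by
      have hnum : Tendsto (fun χ : ℝ => 2 - 2 / χ ^ 2) atTop (nhds 2) := by
        have := hinv.const_mul (2:ℝ)
        simpa [mul_one_div, div_eq_mul_inv] using (tendsto_const_nhds (x := (2:ℝ))).sub this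
      have := hnum.div hden (by norm_num)
      norm_num at this ⊢
      exact this
    refine h.congr' ?_
    filter_upwards [eventually_ge_atTop (1:ℝ)] with χ hχ
    have h0 : χ ≠ 0 := by nlinarith
    have hd : 4 * χ ^ 2 - 1 ≠ 0 := by nlinarith
    field_simp
  have hηχ : Tendsto (fun χ : ℝ => 3 * χ / (4 * χ ^ 2 - 1)) atTop (nhds 0) := by
    have h : Tendsto (fun χ : ℝ => (3 / χ) / (4 - 1 / χ ^ 2)) atTop (nhds 0) := by
      have hnum : Tendsto (fun χ : ℝ => 3 / χ) atTop (nhds 0) := by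
        simpa [mul_one_div, div_eq_mul_inv] using hinv1.const_mul (3:ℝ)
      have := hnum.div hden (by norm_num)
      simpa [Pi.div_def] using this
    refine h.congr' ?_
    filter_upwards [eventually_ge_atTop (1:ℝ)] with χ hχ
    have h0 : χ ≠ 0 := by nlinarith
    have hd : 4 * χ ^ 2 - 1 ≠ 0 := by nlinarith
    field_simp
  have hpair : Tendsto (fun χ : ℝ =>
      (2 * (χ ^ 2 - 1) / (4 * χ ^ 2 - 1), 3 * χ / (4 * χ ^ 2 - 1))) atTop
      (nhds ((1/2 : ℝ), (0 : ℝ))) := hηℓ.prodMk_nhds hηχ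
  have key := (hcont.tendsto ((1/2 : ℝ), (0 : ℝ))).comp hpair
  have hval : F ((1/2 : ℝ), (0 : ℝ)) = (2 : ℝ) ^ (-(k : ℤ)) + (2 : ℝ) ^ ((k : ℤ) - (n : ℤ)) := by
    have e1 : ((2:ℝ)⁻¹) ^ k = (2:ℝ) ^ (-(k:ℤ)) := by
      rw [inv_pow, ← zpow_natCast, ← _root_.zpow_neg]
    have e2 : ((2:ℝ)⁻¹) ^ (n - k) = (2:ℝ) ^ ((k:ℤ) - (n:ℤ)) := by
      rw [inv_pow, ← zpow_natCast, ← _root_.zpow_neg]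
      congr 1
      omega
    show ![1,1] ⬝ᵥ ((!![(1/2:ℝ), 0; 0, 1] ^ k * !![1, 0; 0, (1/2:ℝ)] ^ (n-k)).mulVec ![1,1]) = _
    rw [diagA, diagA, Matrix.mul_fin_two]
    simp [Matrix.mulVec, dotProduct, Fin.sum_univ_two, e1, e2]
  rw [← hval]
  exact key
end

section
/- Fix natural numbers n ≥ m ≥ 0. For real χ, define ζ(χ) := (2χ² − 1)/(2(4χ² − 1)), μ(χ) := χ/(2(4χ² − 1)), η_ℓ(χ) := 2(χ² − 1)/(4χ² − 1), η_χ(χ) := 3χ/(4χ² − 1), and the 2×2 matrices T_O(χ) := [[ζ, μ], [μ, ζ]] and T_𝟙(χ) := [[1, η_χ], [0, η_ℓ]]. Then, as χ → ∞, the scalar (1 1) · T_O(χ)^m · T_𝟙(χ)^{n−m} · (1 1)ᵀ converges to 2^{−2m} · (1 + 2^{m−n}). -/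
open Matrix Filter

lemma diag_pow_fin_two (a d : ℝ) (k : ℕ) :
    (!![a, 0; 0, d] : Matrix (Fin 2) (Fin 2) ℝ) ^ k = !![a ^ k, 0; 0, d ^ k] := by
  induction k with
  | zero => simp [Matrix.one_fin_two]
  | succ k ih => rw [pow_succ, ih, Matrix.mul_fin_two]; ring_nf

/-- **Infinite-bond-dimension limit of the maximal variance of an RMPS marginal.**
With `ζ(χ) = (2χ²−1)/(2(4χ²−1))`, `μ(χ) = χ/(2(4χ²−1))`,
`η_ℓ(χ) = 2(χ²−1)/(4χ²−1)`, `η_χ(χ) = 3χ/(4χ²−1)`,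
`T_O = [[ζ,μ],[μ,ζ]]` and `T_𝟙 = [[1,η_χ],[0,η_ℓ]]`, the sum of all entries of
`T_O^m · T_𝟙^{n−m}` tends to `2^{−2m} (1 + 2^{m−n})` as `χ → ∞`. -/
theorem rmps_marginal_variance_limit (n m : ℕ) (hm : m ≤ n) :
    Tendsto (fun χ : ℝ =>
        ![1, 1] ⬝ᵥ
          ((!![(2 * χ ^ 2 - 1) / (2 * (4 * χ ^ 2 - 1)),
               χ / (2 * (4 * χ ^ 2 - 1));
               χ / (2 * (4 * χ ^ 2 - 1)),
               (2 * χ ^ 2 - 1) / (2 * (4 * χ ^ 2 - 1))] ^ m *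
            !![1, 3 * χ / (4 * χ ^ 2 - 1);
               0, 2 * (χ ^ 2 - 1) / (4 * χ ^ 2 - 1)] ^ (n - m)).mulVec ![1, 1]))
      atTop
      (nhds ((2 : ℝ) ^ (-(2 * m : ℤ)) * (1 + (2 : ℝ) ^ ((m : ℤ) - (n : ℤ))))) := by
  -- continuous scalar function of the four entries
  set g : ℝ × ℝ × ℝ × ℝ → ℝ := fun p =>
      ![1, 1] ⬝ᵥ ((!![p.1, p.2.1; p.2.1, p.1] ^ m *
        !![1, p.2.2.1; 0, p.2.2.2] ^ (n - m)).mulVec ![1, 1]) with hg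
  have hA : Continuous fun p : ℝ × ℝ × ℝ × ℝ => (!![p.1, p.2.1; p.2.1, p.1] : Matrix (Fin 2) (Fin 2) ℝ) := by
    apply continuous_matrix
    intro i j
    fin_cases i <;> fin_cases j <;> simp <;> fun_prop
  have hB : Continuous fun p : ℝ × ℝ × ℝ × ℝ => (!![1, p.2.2.1; 0, p.2.2.2] : Matrix (Fin 2) (Fin 2) ℝ) := by
    apply continuous_matrix
    intro i j
    fin_cases i <;> fin_cases j <;> simp <;> fun_prop
  have hgc : Continuous g :=
    (continuous_const.dotProduct (((hA.pow m).mul (hB.pow (n - m))).matrix_mulVec continuous_const))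
  -- limits of the entries
  have tinv : Tendsto (fun χ : ℝ => χ⁻¹) atTop (nhds 0) := tendsto_inv_atTop_zero
  have tinv2 : Tendsto (fun χ : ℝ => χ⁻¹ ^ 2) atTop (nhds 0) := by
    simpa using tinv.pow 2
  have hden : Tendsto (fun χ : ℝ => 4 - χ⁻¹ ^ 2) atTop (nhds (4 - 0)) :=
    tendsto_const_nhds.sub tinv2
  have hev : ∀ᶠ χ : ℝ in atTop, (1 : ℝ) ≤ χ := eventually_ge_atTop 1
  have hne : ∀ χ : ℝ, 1 ≤ χ → (4 * χ ^ 2 - 1 ≠ 0 ∧ χ ≠ 0) := by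
    intro χ hχ
    constructor
    · nlinarith
    · linarith
  have hζ : Tendsto (fun χ : ℝ => (2 * χ ^ 2 - 1) / (2 * (4 * χ ^ 2 - 1))) atTop (nhds (1/4)) := by
    have : Tendsto (fun χ : ℝ => (2 - χ⁻¹ ^ 2) / (2 * (4 - χ⁻¹ ^ 2))) atTop (nhds ((2 - 0)/(2 * (4 - 0)))) := by
      exact (tendsto_const_nhds.sub tinv2).div (tendsto_const_nhds.mul hden) (by norm_num)
    norm_num only at this
    refine Tendsto.congr' ?_ this
    filter_upwards [hev] with χ hχ
    obtain ⟨h1, h2⟩ := hne χ hχ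
    field_simp
    try ring
  have hμ : Tendsto (fun χ : ℝ => χ / (2 * (4 * χ ^ 2 - 1))) atTop (nhds 0) := by
    have : Tendsto (fun χ : ℝ => χ⁻¹ / (2 * (4 - χ⁻¹ ^ 2))) atTop (nhds (0/(2 * (4 - 0)))) :=
      tinv.div (tendsto_const_nhds.mul hden) (by norm_num)
    norm_num only at this
    refine Tendsto.congr' ?_ this
    filter_upwards [hev] with χ hχ
    obtain ⟨h1, h2⟩ := hne χ hχ
    field_simp
    try ring
  have hηχ : Tendsto (fun χ : ℝ => 3 * χ / (4 * χ ^ 2 - 1)) atTop (nhds 0) := by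
    have : Tendsto (fun χ : ℝ => 3 * χ⁻¹ / (4 - χ⁻¹ ^ 2)) atTop (nhds (3 * 0/(4 - 0))) :=
      (tendsto_const_nhds.mul tinv).div hden (by norm_num)
    norm_num only at this
    refine Tendsto.congr' ?_ this
    filter_upwards [hev] with χ hχ
    obtain ⟨h1, h2⟩ := hne χ hχ
    field_simp
    try ring
  have hηℓ : Tendsto (fun χ : ℝ => 2 * (χ ^ 2 - 1) / (4 * χ ^ 2 - 1)) atTop (nhds (1/2)) := by
    have : Tendsto (fun χ : ℝ => (2 - 2 * χ⁻¹ ^ 2) / (4 - χ⁻¹ ^ 2)) atTop (nhds ((2 - 2*0)/(4 - 0))) :=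
      (tendsto_const_nhds.sub (tendsto_const_nhds.mul tinv2)).div hden (by norm_num)
    norm_num only at this
    refine Tendsto.congr' ?_ this
    filter_upwards [hev] with χ hχ
    obtain ⟨h1, h2⟩ := hne χ hχ
    field_simp
    try ring
  have htuple : Tendsto (fun χ : ℝ => ((2 * χ ^ 2 - 1) / (2 * (4 * χ ^ 2 - 1)),
      (χ / (2 * (4 * χ ^ 2 - 1)), (3 * χ / (4 * χ ^ 2 - 1),
      2 * (χ ^ 2 - 1) / (4 * χ ^ 2 - 1))))) atTop
      (nhds ((1/4 : ℝ), ((0 : ℝ), ((0 : ℝ), (1/2 : ℝ))))) :=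
    hζ.prodMk_nhds (hμ.prodMk_nhds (hηχ.prodMk_nhds hηℓ))
  have key := (hgc.tendsto _).comp htuple
  have hval : g ((1/4 : ℝ), ((0 : ℝ), ((0 : ℝ), (1/2 : ℝ)))) =
      (2 : ℝ) ^ (-(2 * m : ℤ)) * (1 + (2 : ℝ) ^ ((m : ℤ) - (n : ℤ))) := by
    have h1 : ((m : ℤ) - (n : ℤ)) = -((n - m : ℕ) : ℤ) := by
      push_cast [Nat.cast_sub hm]; ring
    have e1 : (2:ℝ) ^ (-(2 * m : ℤ)) = (1/4 : ℝ) ^ m := by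
      have h2 : ((2 * m : ℕ) : ℤ) = 2 * (m : ℤ) := by push_cast; ring
      rw [← h2, _root_.zpow_neg, zpow_natCast, pow_mul]
      norm_num
      rw [one_div, inv_pow]
    have e2 : (2:ℝ) ^ ((m : ℤ) - (n : ℤ)) = (1/2 : ℝ) ^ (n - m) := by
      rw [h1, _root_.zpow_neg, zpow_natCast]
      simp [one_div, inv_pow]
    rw [hg, e1, e2]
    simp only [diag_pow_fin_two, Matrix.mul_fin_two]
    simp [Matrix.mulVec, dotProduct, Fin.sum_univ_two]
    ring
  rw [← hval]
  exact key
end
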